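/- arXiv:1207.1514 — 4 statements merged into one kernel-verified Lean document; each statement's English description precedes it below -/
import Mathlib

section
/- The infinite series ∑_{l=0}^∞ (2l)! / (4^l (l!)^2 (2l+1)) converges and equals π/2. -/
open Real Filter Set

noncomputable def aa (l : ℕ) : ℝ :=
  (Nat.factorial (2 * l) : ℝ) / (4 ^ l * (Nat.factorial l) ^ 2)

lemma aa_pos (l : ℕ) : 0 < aa l := by
  apply div_pos
  · exact_mod_cast Nat.factorial_pos _
  · positivity

lemma aa_zero : aa 0 = 1 := by simp [aa]

lemma aa_rec (l : ℕ) : aa (l + 1) * (2 * l + 2) = aa l * (2 * l + 1) := by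
  have h1 : Nat.factorial (2 * (l + 1)) = (2 * l + 2) * ((2 * l + 1) * Nat.factorial (2 * l)) := by
    have : 2 * (l + 1) = (2 * l + 1) + 1 := by ring
    rw [this, Nat.factorial_succ, Nat.factorial_succ]
  have h2 : Nat.factorial (l + 1) = (l + 1) * Nat.factorial l := Nat.factorial_succ l
  have hf : (Nat.factorial l : ℝ) ≠ 0 := by exact_mod_cast (Nat.factorial_pos l).ne'
  have h4 : (4 : ℝ) ^ l ≠ 0 := by positivity
  have hl1 : ((l : ℝ) + 1) ≠ 0 := by positivity
  simp only [aa, h1, h2]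
  push_cast
  field_simp
  ring

lemma aa_sq (l : ℕ) : (2 * l + 1) * (aa l) ^ 2 ≤ 1 := by
  induction l with
  | zero => simp [aa_zero]
  | succ n ih =>
    have h2 : (0:ℝ) < 2 * n + 2 := by positivity
    have key : aa (n + 1) = aa n * (2 * n + 1) / (2 * n + 2) := by
      have := aa_rec n
      field_simp
      linarith [aa_rec n]
    rw [key]
    have hineq : (2 * (n:ℝ) + 3) * (2 * n + 1) ≤ (2 * n + 2) ^ 2 := by nlinarith
    have han := (aa_pos n).le
    have : (2 * ((n:ℝ) + 1) + 1) * (aa n * (2 * n + 1) / (2 * n + 2)) ^ 2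
        = ((2 * n + 1) * (aa n) ^ 2) * ((2 * n + 3) * (2 * n + 1) / (2 * n + 2) ^ 2) := by
      field_simp; ring
    push_cast
    push_cast at ih
    rw [this]
    have hfrac : (2 * (n:ℝ) + 3) * (2 * n + 1) / (2 * n + 2) ^ 2 ≤ 1 := by
      rw [div_le_one (by positivity)]; exact hineq
    have h1 : (0:ℝ) ≤ (2 * n + 1) * (aa n) ^ 2 := by positivity
    calc ((2 * (n:ℝ) + 1) * aa n ^ 2) * ((2 * n + 3) * (2 * n + 1) / (2 * n + 2) ^ 2)
        ≤ 1 := mul_le_one₀ ih (by positivity) hfrac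

lemma aa_le_one (l : ℕ) : aa l ≤ 1 := by
  nlinarith [aa_sq l, aa_pos l, sq_nonneg (aa l - 1), sq_nonneg (aa l + 1),
    (by positivity : (0:ℝ) ≤ 2 * (l:ℝ))]

lemma aa_le_sqrt (l : ℕ) : aa l ≤ 1 / Real.sqrt (2 * l + 1) := by
  have h : (0:ℝ) < 2 * l + 1 := by positivity
  rw [le_div_iff₀ (Real.sqrt_pos.2 h)]
  have : (aa l * Real.sqrt (2 * l + 1)) ^ 2 ≤ 1 := by
    rw [mul_pow, Real.sq_sqrt h.le]
    nlinarith [aa_sq l]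
  nlinarith [mul_nonneg (aa_pos l).le (Real.sqrt_nonneg (2 * (l:ℝ) + 1)), this]

-- summability of G-series for |x| < 1
lemma sumG {x : ℝ} (hx : |x| < 1) : Summable (fun l : ℕ => aa l * x ^ (2 * l)) := by
  apply Summable.of_norm_bounded (g := fun l : ℕ => (x ^ 2) ^ l)
  · exact summable_geometric_of_lt_one (by positivity) (by nlinarith [abs_nonneg x, sq_abs x])
  · intro l
    rw [norm_mul, norm_pow, pow_mul]
    have h1 : ‖aa l‖ ≤ 1 := by rw [Real.norm_eq_abs, abs_of_pos (aa_pos l)]; exact aa_le_one l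
    have h2 : ‖x‖ ^ 2 ≤ x ^ 2 := by rw [Real.norm_eq_abs, sq_abs]
    calc ‖aa l‖ * (‖x‖ ^ 2) ^ l ≤ 1 * (x ^ 2) ^ l := by
          apply mul_le_mul h1 (pow_le_pow_left₀ (by positivity) h2 l) (by positivity) one_pos.le
      _ = (x ^ 2) ^ l := one_mul _

-- summability of derivative bound series
lemma sumU {r : ℝ} (hr0 : 0 ≤ r) (hr : r < 1) :
    Summable (fun l : ℕ => (2 * l : ℝ) * r ^ (2 * l - 1)) := by
  have hb : Summable (fun l : ℕ => 2 * ((l : ℝ) * r ^ l)) := by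
    apply Summable.mul_left
    have := summable_pow_mul_geometric_of_norm_lt_one (R := ℝ) 1 (r := r)
      (by rwa [Real.norm_eq_abs, abs_of_nonneg hr0])
    simpa using this
  apply Summable.of_nonneg_of_le (fun l => by positivity) _ hb
  · intro l
    rcases Nat.eq_zero_or_pos l with h | h
    · subst h; simp
    · have : r ^ (2 * l - 1) ≤ r ^ l := pow_le_pow_of_le_one hr0 hr.le (by omega)
      calc (2 * l : ℝ) * r ^ (2 * l - 1) ≤ (2 * l : ℝ) * r ^ l := by
            apply mul_le_mul_of_nonneg_left this (by positivity)
        _ = 2 * ((l:ℝ) * r ^ l) := by ring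

noncomputable def G (x : ℝ) : ℝ := ∑' l : ℕ, aa l * x ^ (2 * l)

lemma sumD {x : ℝ} (hx : |x| < 1) :
    Summable (fun l : ℕ => aa l * (2 * l * x ^ (2 * l - 1))) := by
  apply Summable.of_norm_bounded (sumU (abs_nonneg x) hx)
  intro l
  rw [norm_mul, norm_mul, norm_pow, Real.norm_eq_abs, Real.norm_eq_abs, Real.norm_eq_abs,
    abs_of_pos (aa_pos l)]
  have h1 : |(2 * l : ℝ)| = (2 * l : ℝ) := abs_of_nonneg (by positivity)
  rw [h1]
  calc aa l * (2 * l * |x| ^ (2 * l - 1)) ≤ 1 * (2 * l * |x| ^ (2 * l - 1)) := by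
        apply mul_le_mul_of_nonneg_right (aa_le_one l) (by positivity)
    _ = 2 * l * |x| ^ (2 * l - 1) := one_mul _

lemma sumPoly {x : ℝ} (hx : |x| < 1) (b c : ℝ) :
    Summable (fun l : ℕ => aa l * ((b + c * l) * x ^ (2 * l + 1))) := by
  have h1 : Summable (fun l : ℕ => |b| * |x| ^ l) :=
    (summable_geometric_of_lt_one (abs_nonneg x) hx).mul_left _
  have h2 : Summable (fun l : ℕ => |c| * ((l : ℝ) * |x| ^ l)) := by
    apply Summable.mul_left
    have := summable_pow_mul_geometric_of_norm_lt_one (R := ℝ) 1 (r := |x|)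
      (by rwa [Real.norm_eq_abs, abs_abs])
    simpa using this
  apply Summable.of_norm_bounded (h1.add h2)
  intro l
  have hxl : |x| ^ (2 * l + 1) ≤ |x| ^ l := pow_le_pow_of_le_one (abs_nonneg x) hx.le (by omega)
  have hb : ‖aa l * ((b + c * l) * x ^ (2 * l + 1))‖ ≤ (|b| + |c| * l) * |x| ^ (2 * l + 1) := by
    rw [norm_mul, norm_mul, norm_pow, Real.norm_eq_abs, Real.norm_eq_abs, Real.norm_eq_abs,
      abs_of_pos (aa_pos l), ← mul_assoc]
    apply mul_le_mul_of_nonneg_right _ (by positivity)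
    calc aa l * |b + c * l| ≤ 1 * |b + c * l| :=
          mul_le_mul_of_nonneg_right (aa_le_one l) (abs_nonneg _)
      _ = |b + c * l| := one_mul _
      _ ≤ |b| + |c * l| := abs_add_le _ _
      _ = |b| + |c| * l := by rw [abs_mul, Nat.abs_cast]
  calc ‖aa l * ((b + c * l) * x ^ (2 * l + 1))‖ ≤ (|b| + |c| * l) * |x| ^ (2 * l + 1) := hb
    _ ≤ (|b| + |c| * l) * |x| ^ l := mul_le_mul_of_nonneg_left hxl (by positivity)
    _ = |b| * |x| ^ l + |c| * ((l : ℝ) * |x| ^ l) := by ring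

lemma GHasDeriv {x : ℝ} (hx : |x| < 1) :
    HasDerivAt G (∑' l : ℕ, aa l * (2 * l * x ^ (2 * l - 1))) x := by
  set r : ℝ := (|x| + 1) / 2 with hr_def
  have hr0 : 0 ≤ r := by positivity
  have hr1 : r < 1 := by rw [hr_def]; linarith
  have hxr : |x| < r := by rw [hr_def]; linarith
  refine hasDerivAt_tsum_of_isPreconnected (sumU hr0 hr1) Metric.isOpen_ball
    ((convex_ball (0:ℝ) r).isPreconnected)
    (g := fun (l : ℕ) (y : ℝ) => aa l * y ^ (2 * l))
    (g' := fun (l : ℕ) (y : ℝ) => aa l * (2 * l * y ^ (2 * l - 1)))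
    (fun l y _ => by simpa using (hasDerivAt_pow (2 * l) y).const_mul (aa l))
    (fun l y hy => ?_) (Metric.mem_ball_self (by positivity)) ?_ ?_
  · rw [Metric.mem_ball, Real.dist_eq, sub_zero] at hy
    rw [norm_mul, norm_mul, norm_pow, Real.norm_eq_abs, Real.norm_eq_abs, Real.norm_eq_abs,
      abs_of_pos (aa_pos l), abs_of_nonneg (by positivity : (0:ℝ) ≤ 2 * (l:ℝ))]
    have h1 : |y| ^ (2 * l - 1) ≤ r ^ (2 * l - 1) :=
      pow_le_pow_left₀ (abs_nonneg y) hy.le _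
    calc aa l * (2 * l * |y| ^ (2 * l - 1)) ≤ 1 * (2 * l * r ^ (2 * l - 1)) := by
          apply mul_le_mul (aa_le_one l) (mul_le_mul_of_nonneg_left h1 (by positivity))
            (by positivity) one_pos.le
      _ = 2 * l * r ^ (2 * l - 1) := one_mul _
  · apply summable_of_ne_finset_zero (s := {0})
    intro l hl
    simp only [Finset.mem_singleton] at hl
    rw [zero_pow (by omega : 2 * l ≠ 0), mul_zero]
  · rwa [Metric.mem_ball, Real.dist_eq, sub_zero]

lemma key_identity {x : ℝ} (hx : |x| < 1) :
    (1 - x ^ 2) * (∑' l : ℕ, aa l * (2 * l * x ^ (2 * l - 1))) = x * G x := by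
  have sD := sumD hx
  -- T = ∑' l, aa l * ((2l+1) * x^(2l+1))
  have hT : (∑' l : ℕ, aa l * (2 * l * x ^ (2 * l - 1)))
      = ∑' l : ℕ, aa l * ((2 * l + 1) * x ^ (2 * l + 1)) := by
    rw [Summable.tsum_eq_zero_add sD]
    simp only [Nat.mul_zero, Nat.cast_zero, mul_zero, zero_mul, zero_add]
    congr 1
    ext l
    have he : 2 * (l + 1) - 1 = 2 * l + 1 := by omega
    have h := aa_rec l
    rw [he]
    have : aa (l + 1) * (2 * ((l:ℝ) + 1) * x ^ (2 * l + 1))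
        = (aa (l + 1) * (2 * (l:ℝ) + 2)) * x ^ (2 * l + 1) := by ring
    rw [show ((2:ℝ) * (↑(l + 1)) * x ^ (2 * l + 1)) = 2 * ((l:ℝ) + 1) * x ^ (2 * l + 1) by
      push_cast; ring, this, h]
    ring
  -- x^2 * T = ∑' l, aa l * ((2l) * x^(2l+1))
  have hS : (∑' l : ℕ, aa l * ((2 * l : ℝ) * x ^ (2 * l + 1)))
      = x ^ 2 * ∑' l : ℕ, aa l * ((2 * l + 1) * x ^ (2 * l + 1)) := by
    have sS : Summable (fun l : ℕ => aa l * ((2 * l : ℝ) * x ^ (2 * l + 1))) := by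
      have := sumPoly hx 0 2; simpa using this
    rw [Summable.tsum_eq_zero_add sS]
    simp only [Nat.mul_zero, Nat.cast_zero, mul_zero, zero_mul, zero_add]
    rw [← tsum_mul_left]
    congr 1
    ext l
    have h := aa_rec l
    have he : 2 * (l + 1) + 1 = 2 * l + 3 := by omega
    rw [he]
    have h2 : aa (l + 1) * (2 * (↑(l + 1):ℝ) * x ^ (2 * l + 3))
        = (aa (l + 1) * (2 * (l:ℝ) + 2)) * x ^ (2 * l + 3) := by push_cast; ring
    rw [h2, h]
    ring
  have s1 : Summable (fun l : ℕ => aa l * ((2 * l + 1 : ℝ) * x ^ (2 * l + 1))) := by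
    have := sumPoly hx 1 2; simpa [add_comm] using this
  have s2 : Summable (fun l : ℕ => aa l * ((2 * l : ℝ) * x ^ (2 * l + 1))) := by
    have := sumPoly hx 0 2; simpa using this
  rw [hT, sub_mul, one_mul, ← hS, ← Summable.tsum_sub s1 s2]
  have : (∑' l : ℕ, (aa l * ((2 * l + 1 : ℝ) * x ^ (2 * l + 1))
      - aa l * ((2 * l : ℝ) * x ^ (2 * l + 1)))) = ∑' l : ℕ, aa l * x ^ (2 * l + 1) := by
    congr 1; ext l; ring
  rw [this, G, ← tsum_mul_left]
  congr 1; ext l; ring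

lemma G_ge_one {x : ℝ} (hx : |x| < 1) : 1 ≤ G x := by
  have h0 : aa 0 * x ^ (2 * 0) = 1 := by simp [aa_zero]
  have := Summable.le_tsum (sumG hx) 0 (fun j _ => by
    rw [pow_mul]
    exact mul_nonneg (aa_pos j).le (by positivity))
  rw [h0] at this
  exact this

noncomputable def HH (y : ℝ) : ℝ := (G y) ^ 2 * (1 - y ^ 2)

lemma HHasDeriv {y : ℝ} (hy : |y| < 1) : HasDerivAt HH 0 y := by
  have hG := GHasDeriv hy
  set T := ∑' l : ℕ, aa l * (2 * l * y ^ (2 * l - 1)) with hT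
  have h1 : HasDerivAt (fun z => (G z) ^ 2) (2 * G y ^ 1 * T) y := by
    simpa using hG.fun_pow 2
  have h2 : HasDerivAt (fun z : ℝ => 1 - z ^ 2) (-(2 * y ^ 1)) y := by
    simpa using (hasDerivAt_pow 2 y).const_sub 1
  have h3 := h1.mul h2
  have hkey := key_identity hy
  have hval : 2 * G y ^ 1 * T * (1 - y ^ 2) + (G y) ^ 2 * -(2 * y ^ 1) = 0 := by
    have : 2 * G y ^ 1 * T * (1 - y ^ 2) + (G y) ^ 2 * -(2 * y ^ 1)
        = 2 * G y * ((1 - y ^ 2) * T) - 2 * y * (G y) ^ 2 := by ring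
    rw [this, hkey]
    ring
  rw [hval] at h3
  exact h3

lemma const_of_deriv {f : ℝ → ℝ} (hf : ∀ y : ℝ, |y| < 1 → HasDerivAt f 0 y)
    {x : ℝ} (hx : |x| < 1) : f x = f 0 := by
  rcases le_or_gt 0 x with h | h
  · have key := constant_of_has_deriv_right_zero (f := f) (a := 0) (b := x)
      (fun y hy => by
        have : |y| < 1 := by rw [abs_lt] at hx ⊢; constructor <;> [linarith [hy.1]; linarith [hy.2]]
        exact (hf y this).continuousAt.continuousWithinAt)
      (fun y hy => by
        have : |y| < 1 := by rw [abs_lt] at hx ⊢; constructor <;> [linarith [hy.1]; linarith [hy.2.le]]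
        exact (hf y this).hasDerivWithinAt)
    exact key x ⟨h, le_refl x⟩
  · have key := constant_of_has_deriv_right_zero (f := f) (a := x) (b := 0)
      (fun y hy => by
        have : |y| < 1 := by rw [abs_lt] at hx ⊢; constructor <;> [linarith [hy.1]; linarith [hy.2]]
        exact (hf y this).continuousAt.continuousWithinAt)
      (fun y hy => by
        have : |y| < 1 := by rw [abs_lt] at hx ⊢; constructor <;> [linarith [hy.1]; linarith [hy.2]]
        exact (hf y this).hasDerivWithinAt)
    exact (key 0 ⟨h.le, le_refl 0⟩).symm

lemma G_zero : G 0 = 1 := by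
  rw [G, tsum_eq_single 0 (fun b hb => by
    rw [zero_pow (by omega : 2 * b ≠ 0), mul_zero])]
  simp [aa_zero]

lemma G_sq {x : ℝ} (hx : |x| < 1) : (G x) ^ 2 * (1 - x ^ 2) = 1 := by
  have := const_of_deriv (f := HH) (fun y hy => HHasDeriv hy) hx
  rw [HH] at this
  rw [this, HH, G_zero]
  norm_num

lemma G_eq {x : ℝ} (hx : |x| < 1) : G x = 1 / Real.sqrt (1 - x ^ 2) := by
  have h1 : (0:ℝ) < 1 - x ^ 2 := by
    have := sq_abs x
    nlinarith [abs_nonneg x]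
  have hs : 0 < Real.sqrt (1 - x ^ 2) := Real.sqrt_pos.2 h1
  have hG := G_ge_one hx
  have hp : (G x * Real.sqrt (1 - x ^ 2)) ^ 2 = 1 := by
    rw [mul_pow, Real.sq_sqrt h1.le]
    exact G_sq hx
  have hpos : 0 < G x * Real.sqrt (1 - x ^ 2) := by positivity
  have hfac : (G x * Real.sqrt (1 - x ^ 2) - 1) * (G x * Real.sqrt (1 - x ^ 2) + 1) = 0 := by
    nlinarith [hp]
  rcases mul_eq_zero.1 hfac with h | h
  · field_simp
    linarith
  · exfalso; linarith

lemma sumS : Summable (fun l : ℕ => aa l / (2 * l + 1)) := by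
  have hb : Summable (fun l : ℕ => 1 / ((l : ℝ) + 1) ^ (3 / 2 : ℝ)) := by
    have h1 : Summable (fun n : ℕ => 1 / (n : ℝ) ^ (3 / 2 : ℝ)) :=
      Real.summable_one_div_nat_rpow.2 (by norm_num)
    have := (summable_nat_add_iff 1).2 h1
    simpa using this
  apply Summable.of_nonneg_of_le (fun l => div_nonneg (aa_pos l).le (by positivity)) _ hb
  intro l
  have h2l : (0:ℝ) < 2 * l + 1 := by positivity
  have hl1 : (0:ℝ) < (l : ℝ) + 1 := by positivity
  have hs2l : 0 < Real.sqrt (2 * (l:ℝ) + 1) := Real.sqrt_pos.2 h2l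
  have hsl1 : 0 < Real.sqrt ((l : ℝ) + 1) := Real.sqrt_pos.2 hl1
  have hrw : ((l : ℝ) + 1) ^ (3 / 2 : ℝ) = ((l : ℝ) + 1) * Real.sqrt ((l : ℝ) + 1) := by
    rw [show (3 / 2 : ℝ) = 1 + 1 / 2 by norm_num, Real.rpow_add hl1, Real.rpow_one,
      Real.sqrt_eq_rpow]
  rw [hrw]
  have step1 : aa l / (2 * l + 1) ≤ (1 / Real.sqrt (2 * l + 1)) / (2 * l + 1) :=
    div_le_div_of_nonneg_right (aa_le_sqrt l) h2l.le
  have step2 : (1 / Real.sqrt (2 * (l:ℝ) + 1)) / (2 * l + 1)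
      = 1 / (Real.sqrt (2 * (l:ℝ) + 1) * (2 * l + 1)) := by
    rw [div_div]
  have hmono : ((l : ℝ) + 1) * Real.sqrt ((l : ℝ) + 1)
      ≤ Real.sqrt (2 * (l:ℝ) + 1) * (2 * l + 1) := by
    have h1 : (l : ℝ) + 1 ≤ 2 * l + 1 := by nlinarith [Nat.cast_nonneg (α := ℝ) l]
    have h2 : Real.sqrt ((l : ℝ) + 1) ≤ Real.sqrt (2 * (l:ℝ) + 1) := Real.sqrt_le_sqrt h1
    calc ((l : ℝ) + 1) * Real.sqrt ((l : ℝ) + 1)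
        ≤ (2 * (l:ℝ) + 1) * Real.sqrt (2 * (l:ℝ) + 1) :=
          mul_le_mul h1 h2 hsl1.le h2l.le
      _ = Real.sqrt (2 * (l:ℝ) + 1) * (2 * l + 1) := by ring
  have step3 : 1 / (Real.sqrt (2 * (l:ℝ) + 1) * (2 * l + 1))
      ≤ 1 / (((l : ℝ) + 1) * Real.sqrt ((l : ℝ) + 1)) :=
    one_div_le_one_div_of_le (by positivity) hmono
  calc aa l / (2 * l + 1) ≤ (1 / Real.sqrt (2 * (l:ℝ) + 1)) / (2 * l + 1) := step1
    _ = 1 / (Real.sqrt (2 * (l:ℝ) + 1) * (2 * l + 1)) := step2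
    _ ≤ 1 / (((l : ℝ) + 1) * Real.sqrt ((l : ℝ) + 1)) := step3

noncomputable def F (x : ℝ) : ℝ := ∑' l : ℕ, aa l / (2 * l + 1) * x ^ (2 * l + 1)

lemma sumF {x : ℝ} (hx : |x| ≤ 1) :
    Summable (fun l : ℕ => aa l / (2 * l + 1) * x ^ (2 * l + 1)) := by
  apply Summable.of_norm_bounded sumS
  intro l
  rw [norm_mul, norm_pow, Real.norm_eq_abs, Real.norm_eq_abs,
    abs_of_pos (div_pos (aa_pos l) (by positivity))]
  have : |x| ^ (2 * l + 1) ≤ 1 := pow_le_one₀ (abs_nonneg x) hx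
  have hnn : (0:ℝ) ≤ aa l / (2 * l + 1) := div_nonneg (aa_pos l).le (by positivity)
  exact (mul_le_mul_of_nonneg_left this hnn).trans_eq (mul_one _)

lemma FHasDeriv {x : ℝ} (hx : |x| < 1) : HasDerivAt F (G x) x := by
  set r : ℝ := (|x| + 1) / 2 with hr_def
  have hr0 : 0 ≤ r := by positivity
  have hr1 : r < 1 := by rw [hr_def]; linarith
  have hxr : |x| < r := by rw [hr_def]; linarith
  have hu : Summable (fun l : ℕ => (r ^ 2) ^ l) :=
    summable_geometric_of_lt_one (by positivity) (by nlinarith)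
  refine hasDerivAt_tsum_of_isPreconnected hu Metric.isOpen_ball
    ((convex_ball (0:ℝ) r).isPreconnected)
    (g := fun (l : ℕ) (y : ℝ) => aa l / (2 * l + 1) * y ^ (2 * l + 1))
    (g' := fun (l : ℕ) (y : ℝ) => aa l * y ^ (2 * l))
    (fun l y _ => ?_) (fun l y hy => ?_) (Metric.mem_ball_self (by positivity)) ?_ ?_
  · have h := (hasDerivAt_pow (2 * l + 1) y).const_mul (aa l / (2 * l + 1))
    have he : aa l / (2 * l + 1) * ((2 * l + 1 : ℕ) * y ^ (2 * l + 1 - 1)) = aa l * y ^ (2 * l) := by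
      have h2l : ((2 * l + 1 : ℕ) : ℝ) ≠ 0 := by positivity
      push_cast
      field_simp
    rw [he] at h
    exact h
  · rw [Metric.mem_ball, Real.dist_eq, sub_zero] at hy
    rw [norm_mul, norm_pow, Real.norm_eq_abs, Real.norm_eq_abs, abs_of_pos (aa_pos l), pow_mul]
    calc aa l * (|y| ^ 2) ^ l ≤ 1 * (r ^ 2) ^ l := by
          apply mul_le_mul (aa_le_one l) _ (by positivity) one_pos.le
          exact pow_le_pow_left₀ (by positivity) (by nlinarith [abs_nonneg y]) l
      _ = (r ^ 2) ^ l := one_mul _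
  · apply summable_of_ne_finset_zero (s := ∅)
    intro l _
    rw [zero_pow (by omega : 2 * l + 1 ≠ 0), mul_zero]
  · rwa [Metric.mem_ball, Real.dist_eq, sub_zero]

lemma F_zero : F 0 = 0 := by
  rw [F]
  convert tsum_zero with l
  rw [zero_pow (by omega : 2 * l + 1 ≠ 0), mul_zero]

lemma F_eq_arcsin {x : ℝ} (hx : |x| < 1) : F x = Real.arcsin x := by
  have hD : ∀ y : ℝ, |y| < 1 → HasDerivAt (fun z => F z - Real.arcsin z) 0 y := by
    intro y hy
    rw [abs_lt] at hy
    have h1 := FHasDeriv (x := y) (by rw [abs_lt]; exact hy)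
    have h2 := Real.hasDerivAt_arcsin (by linarith [hy.1] : y ≠ -1) (by linarith [hy.2] : y ≠ 1)
    have h3 := h1.fun_sub h2
    rw [G_eq (by rw [abs_lt]; exact hy)] at h3
    simpa using h3
  have := const_of_deriv hD hx
  simp only [F_zero, Real.arcsin_zero, sub_zero] at this
  linarith [this]

theorem arcsin_one_series :
    Summable (fun l : ℕ =>
      (Nat.factorial (2 * l) : ℝ) / (4 ^ l * (Nat.factorial l) ^ 2 * (2 * l + 1))) ∧
    (∑' l : ℕ,
      (Nat.factorial (2 * l) : ℝ) / (4 ^ l * (Nat.factorial l) ^ 2 * (2 * l + 1)))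
      = Real.pi / 2 := by
  have hfun : (fun l : ℕ =>
      (Nat.factorial (2 * l) : ℝ) / (4 ^ l * (Nat.factorial l) ^ 2 * (2 * l + 1)))
      = fun l : ℕ => aa l / (2 * l + 1) := by
    funext l
    rw [aa, div_div]
  rw [hfun]
  refine ⟨sumS, le_antisymm ?_ ?_⟩
  · apply Summable.tsum_le_of_sum_le sumS
    intro s
    have hcont : Tendsto (fun x : ℝ => ∑ l ∈ s, aa l / (2 * l + 1) * x ^ (2 * l + 1))
        (nhdsWithin 1 (Set.Iio 1)) (nhds (∑ l ∈ s, aa l / (2 * l + 1) * (1:ℝ) ^ (2 * l + 1))) := by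
      apply Continuous.tendsto ?_ 1 |>.mono_left nhdsWithin_le_nhds
      exact continuous_finset_sum s fun l _ => by continuity
    have hval : (∑ l ∈ s, aa l / (2 * l + 1) * (1:ℝ) ^ (2 * l + 1))
        = ∑ l ∈ s, aa l / (2 * l + 1) := by
      apply Finset.sum_congr rfl
      intro l _
      rw [one_pow, mul_one]
    rw [hval] at hcont
    apply le_of_tendsto hcont
    filter_upwards [Ioo_mem_nhdsLT_of_mem (show (1:ℝ) ∈ Set.Ioc 0 1 by constructor <;> norm_num)]
      with x hx
    have hx1 : |x| < 1 := by rw [abs_lt]; exact ⟨by linarith [hx.1], hx.2⟩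
    calc (∑ l ∈ s, aa l / (2 * l + 1) * x ^ (2 * l + 1))
        ≤ F x := by
          apply Summable.sum_le_tsum s _ (sumF hx1.le)
          intro l _
          have h1 : (0:ℝ) < x := hx.1
          exact mul_nonneg (div_nonneg (aa_pos l).le (by positivity)) (by positivity)
      _ = Real.arcsin x := F_eq_arcsin hx1
      _ ≤ Real.pi / 2 := Real.arcsin_le_pi_div_two x
  · have harcsin : Tendsto Real.arcsin (nhdsWithin 1 (Set.Iio 1)) (nhds (Real.pi / 2)) := by
      have := (Real.continuous_arcsin.tendsto 1).mono_left
        (nhdsWithin_le_nhds (s := Set.Iio (1:ℝ)))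
      rwa [Real.arcsin_one] at this
    apply le_of_tendsto harcsin
    filter_upwards [Ioo_mem_nhdsLT_of_mem (show (1:ℝ) ∈ Set.Ioc 0 1 by constructor <;> norm_num)]
      with x hx
    have hx1 : |x| < 1 := by rw [abs_lt]; exact ⟨by linarith [hx.1], hx.2⟩
    rw [← F_eq_arcsin hx1]
    apply Summable.tsum_le_tsum _ (sumF hx1.le) sumS
    intro l
    have hxle : x ≤ 1 := hx.2.le
    have hp : x ^ (2 * l + 1) ≤ 1 := pow_le_one₀ hx.1.le hxle
    have hnn : (0:ℝ) ≤ aa l / (2 * l + 1) := div_nonneg (aa_pos l).le (by positivity)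
    exact (mul_le_mul_of_nonneg_left hp hnn).trans_eq (mul_one _)
end

section
/- Let Z be a nonnegative real random variable and θ an independent random variable uniformly distributed on [0, 2π]. Suppose there exist constants c > 0, z_th > 0, and α > 0 such that P(Z > z) = c / z^α for all z ≥ z_th. Then for all x ≥ z_th, P(Z·cos θ > x) = c₁ / x^α, where c₁ = (c/π) ∫_0^{π/2} (cos ϑ)^α dϑ. -/
open MeasureTheory ProbabilityTheory Real


lemma cont_maxcos (α : ℝ) (hα : 0 < α) :
    Continuous fun t : ℝ => (max (Real.cos t) 0) ^ α :=
  (Real.continuous_cos.max continuous_const).rpow_const (fun _ => Or.inr hα.le)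

lemma integral_max_cos (α : ℝ) (hα : 0 < α) :
    ∫ t in (0:ℝ)..(2*π), (max (Real.cos t) 0) ^ α
      = 2 * ∫ ϑ in (0:ℝ)..(π/2), Real.cos ϑ ^ α := by
  have hcont := cont_maxcos α hα
  have hint : ∀ a b : ℝ, IntervalIntegrable (fun t => (max (Real.cos t) 0) ^ α) volume a b :=
    fun a b => hcont.intervalIntegrable a b
  have h1 : ∫ t in (0:ℝ)..(π/2), (max (Real.cos t) 0) ^ α
      = ∫ ϑ in (0:ℝ)..(π/2), Real.cos ϑ ^ α := by
    apply intervalIntegral.integral_congr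
    intro t ht
    rw [Set.uIcc_of_le (by positivity)] at ht
    have : 0 ≤ Real.cos t := Real.cos_nonneg_of_mem_Icc
      ⟨le_trans (by linarith [Real.pi_pos]) ht.1, ht.2⟩
    simp [max_eq_left this]
  have h2 : ∫ t in (π/2)..(3*π/2), (max (Real.cos t) 0) ^ α = 0 := by
    rw [intervalIntegral.integral_congr (g := fun _ => (0:ℝ)) ?_, intervalIntegral.integral_const,
      smul_zero]
    intro t ht
    rw [Set.uIcc_of_le (by linarith [Real.pi_pos])] at ht
    have : Real.cos t ≤ 0 := Real.cos_nonpos_of_pi_div_two_le_of_le ht.1 (by linarith [ht.2])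
    simp [max_eq_right this, Real.zero_rpow hα.ne']
  have h3 : ∫ t in (3*π/2)..(2*π), (max (Real.cos t) 0) ^ α
      = ∫ ϑ in (0:ℝ)..(π/2), Real.cos ϑ ^ α := by
    have := intervalIntegral.integral_comp_sub_left
      (f := fun t => (max (Real.cos t) 0) ^ α) (a := 0) (b := π/2) (2*π)
    rw [show 2*π - π/2 = 3*π/2 by ring, sub_zero] at this
    rw [← this]
    apply intervalIntegral.integral_congr
    intro t ht
    rw [Set.uIcc_of_le (by positivity)] at ht
    have : 0 ≤ Real.cos t := Real.cos_nonneg_of_mem_Icc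
      ⟨le_trans (by linarith [Real.pi_pos]) ht.1, ht.2⟩
    simp only []
    rw [Real.cos_two_pi_sub, max_eq_left this]
  have e1 := intervalIntegral.integral_add_adjacent_intervals (a := (0:ℝ)) (b := π/2)
    (c := 3*π/2) (hint _ _) (hint _ _)
  have e2 := intervalIntegral.integral_add_adjacent_intervals (a := (0:ℝ)) (b := 3*π/2)
    (c := 2*π) (hint _ _) (hint _ _)
  rw [← e2, ← e1, h1, h2, h3]; ring

theorem power_law_tail_Z_cos
    {Ω : Type*} [MeasureSpace Ω] [IsProbabilityMeasure (ℙ : Measure Ω)]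
    (Z θ : Ω → ℝ) (hZm : Measurable Z) (hθm : Measurable θ)
    (hZpos : ∀ ω, 0 ≤ Z ω)
    (hindep : IndepFun Z θ ℙ)
    (hθunif : Measure.map θ ℙ
      = (ENNReal.ofReal (2 * π))⁻¹ • (volume.restrict (Set.Icc (0:ℝ) (2 * π))))
    (c z_th α : ℝ) (hc : 0 < c) (hzth : 0 < z_th) (hα : 0 < α)
    (htail : ∀ z ≥ z_th, ℙ {ω | Z ω > z} = ENNReal.ofReal (c / z ^ α)) :
    ∀ x ≥ z_th,
      ℙ {ω | Z ω * Real.cos (θ ω) > x}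
        = ENNReal.ofReal
            ((c / π) * (∫ ϑ in (0:ℝ)..(π / 2), (Real.cos ϑ) ^ α) / x ^ α) := by
  intro x hx
  have hπ := Real.pi_pos
  have hx0 : 0 < x := lt_of_lt_of_le hzth hx
  have hxα : 0 < x ^ α := Real.rpow_pos_of_pos hx0 α
  -- the measurable set in the product space
  set s : Set (ℝ × ℝ) := {p : ℝ × ℝ | p.2 * Real.cos p.1 > x} with hs
  have hsm : MeasurableSet s := by
    have : Continuous fun p : ℝ × ℝ => p.2 * Real.cos p.1 :=
      continuous_snd.mul (Real.continuous_cos.comp continuous_fst)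
    exact (isOpen_lt continuous_const this).measurableSet
  have hmap : Measure.map (fun ω => (θ ω, Z ω)) ℙ = (Measure.map θ ℙ).prod (Measure.map Z ℙ) :=
    (indepFun_iff_map_prod_eq_prod_map_map hθm.aemeasurable hZm.aemeasurable).1 hindep.symm
  have hPmZ : IsProbabilityMeasure (Measure.map Z ℙ) := Measure.isProbabilityMeasure_map hZm.aemeasurable
  have step1 : ℙ {ω | Z ω * Real.cos (θ ω) > x}
      = ∫⁻ t, (Measure.map Z ℙ) (Prod.mk t ⁻¹' s) ∂(Measure.map θ ℙ) := by
    rw [← Measure.prod_apply hsm, ← hmap,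
      Measure.map_apply (hθm.prodMk hZm) hsm]
    rfl
  -- compute the slice measure
  have slice : ∀ t : ℝ, (Measure.map Z ℙ) (Prod.mk t ⁻¹' s)
      = ENNReal.ofReal ((c / x ^ α) * (max (Real.cos t) 0) ^ α) := by
    intro t
    have hpre : Prod.mk t ⁻¹' s = {z : ℝ | z * Real.cos t > x} := rfl
    have hsm2 : MeasurableSet {z : ℝ | z * Real.cos t > x} := by
      have : Continuous fun z : ℝ => z * Real.cos t := continuous_id.mul continuous_const
      exact (isOpen_lt continuous_const this).measurableSet
    rw [hpre, Measure.map_apply hZm hsm2]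
    rcases le_or_gt (Real.cos t) 0 with hct | hct
    · have hempty : Z ⁻¹' {z : ℝ | z * Real.cos t > x} = ∅ := by
        ext ω
        simp only [Set.mem_preimage, Set.mem_setOf_eq, Set.mem_empty_iff_false, iff_false, not_lt]
        exact le_trans (mul_nonpos_of_nonneg_of_nonpos (hZpos ω) hct) hx0.le
      rw [hempty, measure_empty, max_eq_right hct, Real.zero_rpow hα.ne', mul_zero,
        ENNReal.ofReal_zero]
    · have hset : Z ⁻¹' {z : ℝ | z * Real.cos t > x} = {ω | Z ω > x / Real.cos t} := by
        ext ω
        simp only [Set.mem_preimage, Set.mem_setOf_eq]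
        rw [gt_iff_lt, gt_iff_lt, div_lt_iff₀ hct]
      have hge : x / Real.cos t ≥ z_th := by
        refine le_trans hx ?_
        rw [le_div_iff₀ hct]
        nlinarith [Real.cos_le_one t]
      rw [hset, htail _ hge]
      congr 1
      rw [max_eq_left hct.le, Real.div_rpow hx0.le hct.le]
      have h1 : (0:ℝ) < Real.cos t ^ α := Real.rpow_pos_of_pos hct α
      field_simp
  set I : ℝ := ∫ ϑ in (0:ℝ)..(π / 2), (Real.cos ϑ) ^ α with hI
  set g : ℝ → ℝ := fun t => (c / x ^ α) * (max (Real.cos t) 0) ^ α with hg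
  have hg_cont : Continuous g :=
    continuous_const.mul ((Real.continuous_cos.max continuous_const).rpow_const
      (fun _ => Or.inr hα.le))
  rw [step1, lintegral_congr slice, hθunif, lintegral_smul_measure]
  have hint : Integrable g (volume.restrict (Set.Icc (0:ℝ) (2*π))) :=
    hg_cont.integrableOn_Icc
  have hnn : 0 ≤ᵐ[volume.restrict (Set.Icc (0:ℝ) (2*π))] g := by
    filter_upwards with t
    have : (0:ℝ) ≤ (max (Real.cos t) 0) ^ α := Real.rpow_nonneg (le_max_right _ _) α
    positivity
  have key : ∫⁻ t in Set.Icc (0:ℝ) (2*π), ENNReal.ofReal (g t)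
      = ENNReal.ofReal (∫ t in Set.Icc (0:ℝ) (2*π), g t) :=
    (ofReal_integral_eq_lintegral_ofReal hint hnn).symm
  rw [key]
  have hIcc : ∫ t in Set.Icc (0:ℝ) (2*π), g t = ∫ t in (0:ℝ)..(2*π), g t := by
    rw [MeasureTheory.integral_Icc_eq_integral_Ioc, intervalIntegral.integral_of_le (by positivity)]
  have hval : ∫ t in (0:ℝ)..(2*π), g t = (c / x ^ α) * (2 * I) := by
    rw [hg]
    simp only []
    rw [intervalIntegral.integral_const_mul, integral_max_cos α hα]
  rw [hIcc, hval]
  have hreal : (c / π) * I / x ^ α = ((c / x ^ α) * (2 * I)) / (2 * π) := by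
    field_simp
  rw [hreal, ENNReal.ofReal_div_of_pos (by positivity), mul_comm]
  rw [smul_eq_mul, ENNReal.div_eq_inv_mul]
end

section
/- Let Z₁, Z₂ be i.i.d. nonnegative random variables with P(Z > z) = c/z^α for all z ≥ z_th (c > 0, z_th > 0, α > 0), and θ₁, θ₂ i.i.d. Uniform[0,2π], with Z₁, Z₂, θ₁, θ₂ mutually independent. Then for all z ≥ 2 z_th, P(Z₁ cos θ₁ − Z₂ cos θ₂ > z) ≤ c_u / z^α, where c_u = (2^{1+α} c / π) ∫_0^{π/2} (cos ϑ)^α dϑ. -/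
open MeasureTheory ProbabilityTheory Real

lemma maxcos_cont (α : ℝ) (hα : 0 < α) :
    Continuous fun y : ℝ => (max (Real.cos y) 0) ^ α :=
  (Real.continuous_cos.max continuous_const).rpow_const (fun _ => Or.inr hα.le)

lemma maxcos_integral (α : ℝ) (hα : 0 < α) :
    ∫ y in (0:ℝ)..(2*π), (max (Real.cos y) 0) ^ α
      = 2 * ∫ ϑ in (0:ℝ)..(π/2), (Real.cos ϑ) ^ α := by
  have hf := maxcos_cont α hα
  have hii : ∀ a b : ℝ, IntervalIntegrable (fun y => (max (Real.cos y) 0) ^ α) volume a b :=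
    fun a b => hf.intervalIntegrable a b
  have h1 : (∫ y in (0:ℝ)..(π/2), (max (Real.cos y) 0) ^ α)
      = ∫ ϑ in (0:ℝ)..(π/2), (Real.cos ϑ) ^ α := by
    apply intervalIntegral.integral_congr
    intro y hy
    rw [Set.uIcc_of_le (by positivity)] at hy
    have : 0 ≤ Real.cos y :=
      Real.cos_nonneg_of_mem_Icc ⟨by linarith [hy.1, pi_pos], hy.2⟩
    simp [max_eq_left this]
  have h2 : (∫ y in (π/2)..(3*π/2), (max (Real.cos y) 0) ^ α) = 0 := by
    have : (∫ y in (π/2)..(3*π/2), (max (Real.cos y) 0) ^ α)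
        = ∫ _ in (π/2)..(3*π/2), (0:ℝ) := by
      apply intervalIntegral.integral_congr
      intro y hy
      rw [Set.uIcc_of_le (by linarith [pi_pos])] at hy
      have : Real.cos y ≤ 0 :=
        Real.cos_nonpos_of_pi_div_two_le_of_le hy.1 (by linarith [hy.2])
      simp [max_eq_right this, Real.zero_rpow hα.ne']
    simp [this]
  have h3 : (∫ y in (3*π/2)..(2*π), (max (Real.cos y) 0) ^ α)
      = ∫ ϑ in (0:ℝ)..(π/2), (Real.cos ϑ) ^ α := by
    have e1 : (∫ y in (-(π/2))..(0:ℝ), (max (Real.cos (y + 2*π)) 0) ^ α)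
        = ∫ y in (-(π/2) + 2*π)..((0:ℝ) + 2*π), (max (Real.cos y) 0) ^ α :=
      intervalIntegral.integral_comp_add_right (2*π) (f := fun y => (max (Real.cos y) 0) ^ α) ..
    have e2 : (∫ y in (0:ℝ)..(π/2), (max (Real.cos (-y)) 0) ^ α)
        = ∫ y in (-(π/2))..(-(0:ℝ)), (max (Real.cos y) 0) ^ α :=
      intervalIntegral.integral_comp_neg (f := fun y => (max (Real.cos y) 0) ^ α)
    simp only [Real.cos_add_two_pi] at e1
    simp only [Real.cos_neg, neg_zero] at e2
    rw [show (-(π/2) + 2*π : ℝ) = 3*π/2 by ring, zero_add] at e1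
    rw [← e1, ← e2, h1]
  have hsplit : (∫ y in (0:ℝ)..(π/2), (max (Real.cos y) 0) ^ α)
        + (∫ y in (π/2)..(3*π/2), (max (Real.cos y) 0) ^ α)
        + (∫ y in (3*π/2)..(2*π), (max (Real.cos y) 0) ^ α)
      = ∫ y in (0:ℝ)..(2*π), (max (Real.cos y) 0) ^ α := by
    rw [intervalIntegral.integral_add_adjacent_intervals (hii _ _) (hii _ _),
      intervalIntegral.integral_add_adjacent_intervals (hii _ _) (hii _ _)]
  rw [← hsplit, h1, h2, h3]; ring

lemma tail_bound {Ω : Type*} [MeasureSpace Ω] [IsProbabilityMeasure (ℙ : Measure Ω)]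
    (Z θ : Ω → ℝ) (hZm : Measurable Z) (hθm : Measurable θ)
    (hZpos : ∀ ω, 0 ≤ Z ω)
    (hindep : IndepFun θ Z ℙ)
    (hθunif : Measure.map θ ℙ
      = (ENNReal.ofReal (2 * π))⁻¹ • (volume.restrict (Set.Icc (0:ℝ) (2 * π))))
    (c z_th α : ℝ) (hc : 0 < c) (hzth : 0 < z_th) (hα : 0 < α)
    (htail : ∀ z ≥ z_th, ℙ {ω | Z ω > z} = ENNReal.ofReal (c / z ^ α))
    (ε t : ℝ) (hε : ε = 1 ∨ ε = -1) (ht : z_th ≤ t) :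
    ℙ {ω | ε * (Z ω * Real.cos (θ ω)) > t}
      ≤ ENNReal.ofReal ((c / t ^ α) * (∫ ϑ in (0:ℝ)..(π/2), (Real.cos ϑ) ^ α) / π) := by
  have ht0 : 0 < t := lt_of_lt_of_le hzth ht
  set S : Set (ℝ × ℝ) := {p | ε * (p.2 * Real.cos p.1) > t} with hSdef
  have hS : MeasurableSet S := by
    apply measurableSet_lt measurable_const
    fun_prop
  have hmap : ℙ {ω | ε * (Z ω * Real.cos (θ ω)) > t}
      = ((Measure.map θ ℙ).prod (Measure.map Z ℙ)) S := by
    rw [← (indepFun_iff_map_prod_eq_prod_map_map hθm.aemeasurable hZm.aemeasurable).mp hindep,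
      Measure.map_apply (hθm.prodMk hZm) hS]
    rfl
  have hsec : ∀ y : ℝ, (Measure.map Z ℙ) (Prod.mk y ⁻¹' S)
      ≤ ENNReal.ofReal ((c / t ^ α) * (max (ε * Real.cos y) 0) ^ α) := by
    intro y
    have hset : Prod.mk y ⁻¹' S = {x : ℝ | x * (ε * Real.cos y) > t} := by
      ext x; simp [hSdef]; constructor <;> intro h <;> nlinarith [h]
    have hms : MeasurableSet {x : ℝ | x * (ε * Real.cos y) > t} := by
      apply measurableSet_lt measurable_const; fun_prop
    rw [hset, Measure.map_apply hZm hms]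
    set u := ε * Real.cos y with hu
    rcases le_or_gt u 0 with hu0 | hu0
    · have : Z ⁻¹' {x : ℝ | x * u > t} = ∅ := by
        ext ω; simp only [Set.mem_preimage, Set.mem_setOf_eq, Set.mem_empty_iff_false,
          iff_false, not_lt]
        exact le_trans (mul_nonpos_of_nonneg_of_nonpos (hZpos ω) hu0) ht0.le
      rw [this]; simp
    · have hcos1 := Real.cos_le_one y
      have hcos2 := Real.neg_one_le_cos y
      have hu1 : u ≤ 1 := by
        rcases hε with h | h <;> simp only [hu, h, one_mul, neg_one_mul] <;> linarith
      have hdiv : z_th ≤ t / u := by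
        calc z_th ≤ t := ht
        _ ≤ t / u := by
            rw [le_div_iff₀ hu0]
            exact mul_le_of_le_one_right ht0.le hu1
      have hseteq : Z ⁻¹' {x : ℝ | x * u > t} = {ω | Z ω > t / u} := by
        ext ω
        simp only [Set.mem_preimage, Set.mem_setOf_eq, gt_iff_lt, div_lt_iff₀ hu0]
      rw [hseteq, htail _ hdiv]
      apply le_of_eq
      congr 1
      have h1 : (t / u) ^ α = t ^ α / u ^ α := Real.div_rpow ht0.le hu0.le α
      have h2 : max u 0 = u := max_eq_left hu0.le
      rw [h2, h1]
      have htα : (0:ℝ) < t ^ α := Real.rpow_pos_of_pos ht0 α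
      have huα : (0:ℝ) < u ^ α := Real.rpow_pos_of_pos hu0 α
      field_simp
  calc ℙ {ω | ε * (Z ω * Real.cos (θ ω)) > t}
      = ∫⁻ y, (Measure.map Z ℙ) (Prod.mk y ⁻¹' S) ∂(Measure.map θ ℙ) := by
        rw [hmap, Measure.prod_apply hS]
    _ ≤ ∫⁻ y, ENNReal.ofReal ((c / t ^ α) * (max (ε * Real.cos y) 0) ^ α)
          ∂(Measure.map θ ℙ) := lintegral_mono hsec
    _ = (ENNReal.ofReal (2 * π))⁻¹
          * ∫⁻ y in Set.Icc (0:ℝ) (2*π),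
              ENNReal.ofReal ((c / t ^ α) * (max (ε * Real.cos y) 0) ^ α) := by
        rw [hθunif, lintegral_smul_measure, smul_eq_mul]
    _ = (ENNReal.ofReal (2 * π))⁻¹
          * ENNReal.ofReal (∫ y in Set.Icc (0:ℝ) (2*π),
              (c / t ^ α) * (max (ε * Real.cos y) 0) ^ α) := by
        congr 1
        rw [← ofReal_integral_eq_lintegral_ofReal]
        · apply Continuous.integrableOn_Icc
          exact continuous_const.mul
            (((continuous_const.mul Real.continuous_cos).max continuous_const).rpow_const
              (fun _ => Or.inr hα.le))
        · filter_upwards with y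
          exact mul_nonneg (by positivity) (Real.rpow_nonneg (le_max_right _ _) α)
    _ ≤ ENNReal.ofReal ((c / t ^ α) * (∫ ϑ in (0:ℝ)..(π/2), (Real.cos ϑ) ^ α) / π) := by
        have hIeq : (∫ y in Set.Icc (0:ℝ) (2*π),
              (c / t ^ α) * (max (ε * Real.cos y) 0) ^ α)
            = (c / t ^ α) * (2 * ∫ ϑ in (0:ℝ)..(π/2), (Real.cos ϑ) ^ α) := by
          rw [MeasureTheory.integral_Icc_eq_integral_Ioc,
            ← intervalIntegral.integral_of_le (by positivity),
            intervalIntegral.integral_const_mul]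
          congr 1
          rcases hε with h | h
          · simp only [h, one_mul]
            exact maxcos_integral α hα
          · simp only [h]
            have hre : ∀ y : ℝ, max (-1 * Real.cos y) 0 = max (Real.cos (y + π)) 0 := by
              intro y; rw [Real.cos_add_pi]; ring_nf
            simp only [hre]
            have e1 : (∫ y in (0:ℝ)..(2*π), (max (Real.cos (y + π)) 0) ^ α)
                = ∫ y in (0 + π)..(2*π + π), (max (Real.cos y) 0) ^ α :=
              intervalIntegral.integral_comp_add_right π
                (f := fun y => (max (Real.cos y) 0) ^ α) ..
            have hper : Function.Periodic (fun y : ℝ => (max (Real.cos y) 0) ^ α) (2*π) := by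
              intro y; simp [Real.cos_add_two_pi]
            have e2 := hper.intervalIntegral_add_eq π 0
            rw [e1, show (0:ℝ) + π = π by ring, show (2*π + π : ℝ) = π + 2*π by ring, e2,
              zero_add]
            exact maxcos_integral α hα
        rw [hIeq, mul_comm, ← div_eq_mul_inv,
          ← ENNReal.ofReal_div_of_pos (by positivity : (0:ℝ) < 2 * π)]
        apply le_of_eq
        congr 1
        have hπ : (π:ℝ) ≠ 0 := Real.pi_ne_zero
        field_simp

theorem diff_Z_cos_upper_bound
    {Ω : Type*} [MeasureSpace Ω] [IsProbabilityMeasure (ℙ : Measure Ω)]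
    (Z₁ Z₂ θ₁ θ₂ : Ω → ℝ)
    (hZ₁m : Measurable Z₁) (hZ₂m : Measurable Z₂)
    (hθ₁m : Measurable θ₁) (hθ₂m : Measurable θ₂)
    (hZ₁pos : ∀ ω, 0 ≤ Z₁ ω) (hZ₂pos : ∀ ω, 0 ≤ Z₂ ω)
    (hindep : iIndepFun ![Z₁, Z₂, θ₁, θ₂] ℙ)
    (hZid : Measure.map Z₁ ℙ = Measure.map Z₂ ℙ)
    (hθ₁unif : Measure.map θ₁ ℙ
      = (ENNReal.ofReal (2 * π))⁻¹ • (volume.restrict (Set.Icc (0:ℝ) (2 * π))))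
    (hθ₂unif : Measure.map θ₂ ℙ
      = (ENNReal.ofReal (2 * π))⁻¹ • (volume.restrict (Set.Icc (0:ℝ) (2 * π))))
    (c z_th α : ℝ) (hc : 0 < c) (hzth : 0 < z_th) (hα : 0 < α)
    (htail : ∀ z ≥ z_th, ℙ {ω | Z₁ ω > z} = ENNReal.ofReal (c / z ^ α)) :
    ∀ z ≥ 2 * z_th,
      ℙ {ω | Z₁ ω * Real.cos (θ₁ ω) - Z₂ ω * Real.cos (θ₂ ω) > z}
        ≤ ENNReal.ofReal
            ((2 ^ (1 + α) * c / π) * (∫ ϑ in (0:ℝ)..(π / 2), (Real.cos ϑ) ^ α)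
              / z ^ α) := by
  intro z hz
  have hz0 : 0 < z := lt_of_lt_of_le (by positivity) hz
  have ht : z_th ≤ z / 2 := by linarith
  have hI0 : 0 ≤ ∫ ϑ in (0:ℝ)..(π/2), (Real.cos ϑ) ^ α := by
    apply intervalIntegral.integral_nonneg (by positivity)
    intro u hu
    exact Real.rpow_nonneg
      (Real.cos_nonneg_of_mem_Icc ⟨by linarith [hu.1, pi_pos], hu.2⟩) α
  have hind1 : IndepFun θ₁ Z₁ ℙ := by
    have h := hindep.indepFun (i := 2) (j := 0) (by decide)
    simpa using h
  have hind2 : IndepFun θ₂ Z₂ ℙ := by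
    have h := hindep.indepFun (i := 3) (j := 1) (by decide)
    simpa using h
  have htail₂ : ∀ v ≥ z_th, ℙ {ω | Z₂ ω > v} = ENNReal.ofReal (c / v ^ α) := by
    intro v hv
    have e1 : ℙ {ω | Z₂ ω > v} = Measure.map Z₂ ℙ (Set.Ioi v) := by
      rw [Measure.map_apply hZ₂m measurableSet_Ioi]; rfl
    have e2 : ℙ {ω | Z₁ ω > v} = Measure.map Z₁ ℙ (Set.Ioi v) := by
      rw [Measure.map_apply hZ₁m measurableSet_Ioi]; rfl
    rw [e1, ← hZid, ← e2, htail v hv]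
  have hb1 := tail_bound Z₁ θ₁ hZ₁m hθ₁m hZ₁pos hind1 hθ₁unif c z_th α hc hzth hα
    htail 1 (z/2) (Or.inl rfl) ht
  have hb2 := tail_bound Z₂ θ₂ hZ₂m hθ₂m hZ₂pos hind2 hθ₂unif c z_th α hc hzth hα
    htail₂ (-1) (z/2) (Or.inr rfl) ht
  have hsub : {ω | Z₁ ω * Real.cos (θ₁ ω) - Z₂ ω * Real.cos (θ₂ ω) > z}
      ⊆ {ω | (1:ℝ) * (Z₁ ω * Real.cos (θ₁ ω)) > z/2}
        ∪ {ω | (-1:ℝ) * (Z₂ ω * Real.cos (θ₂ ω)) > z/2} := by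
    intro ω hω
    simp only [Set.mem_setOf_eq, Set.mem_union] at *
    by_contra hcon
    push_neg at hcon
    obtain ⟨h1, h2⟩ := hcon
    linarith
  have ha : 0 ≤ (c / (z/2) ^ α) * (∫ ϑ in (0:ℝ)..(π/2), (Real.cos ϑ) ^ α) / π := by
    apply div_nonneg _ pi_pos.le
    exact mul_nonneg (div_nonneg hc.le (Real.rpow_nonneg (by positivity) α)) hI0
  calc ℙ {ω | Z₁ ω * Real.cos (θ₁ ω) - Z₂ ω * Real.cos (θ₂ ω) > z}
      ≤ ℙ {ω | (1:ℝ) * (Z₁ ω * Real.cos (θ₁ ω)) > z/2}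
        + ℙ {ω | (-1:ℝ) * (Z₂ ω * Real.cos (θ₂ ω)) > z/2} :=
      le_trans (measure_mono hsub) (measure_union_le _ _)
    _ ≤ ENNReal.ofReal ((c / (z/2) ^ α) * (∫ ϑ in (0:ℝ)..(π/2), (Real.cos ϑ) ^ α) / π)
        + ENNReal.ofReal ((c / (z/2) ^ α) * (∫ ϑ in (0:ℝ)..(π/2), (Real.cos ϑ) ^ α) / π) :=
      add_le_add hb1 hb2
    _ = ENNReal.ofReal ((c / (z/2) ^ α) * (∫ ϑ in (0:ℝ)..(π/2), (Real.cos ϑ) ^ α) / π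
        + (c / (z/2) ^ α) * (∫ ϑ in (0:ℝ)..(π/2), (Real.cos ϑ) ^ α) / π) :=
      (ENNReal.ofReal_add ha ha).symm
    _ ≤ ENNReal.ofReal
          ((2 ^ (1 + α) * c / π) * (∫ ϑ in (0:ℝ)..(π / 2), (Real.cos ϑ) ^ α) / z ^ α) := by
      apply ENNReal.ofReal_le_ofReal
      apply le_of_eq
      have h2α : (2:ℝ) ^ (1 + α) = 2 * 2 ^ α := by
        rw [Real.rpow_add two_pos, Real.rpow_one]
      have hhalf : ((z/2:ℝ)) ^ α = z ^ α / 2 ^ α := Real.div_rpow hz0.le (by norm_num) α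
      have hzα : (0:ℝ) < z ^ α := Real.rpow_pos_of_pos hz0 α
      have h2αp : (0:ℝ) < (2:ℝ) ^ α := Real.rpow_pos_of_pos two_pos α
      rw [hhalf, h2α]
      field_simp
      ring
end

section
/- Let Z₁, Z₂ be i.i.d. nonnegative random variables with P(Z > z) = c/z^α for all z ≥ z_th (c > 0, z_th > 0, α > 0), and θ₁, θ₂ i.i.d. Uniform[0,2π], all mutually independent. Then for all z ≥ 2 z_th, P(Z₁ cos θ₁ − Z₂ cos θ₂ > z) ≥ c_l / z^α, where c_l = (c / (2π)) ∫_0^{π/2} (cos ϑ)^α dϑ. -/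
open MeasureTheory ProbabilityTheory Real

theorem diff_Z_cos_lower_bound
    {Ω : Type*} [MeasureSpace Ω] [IsProbabilityMeasure (ℙ : Measure Ω)]
    (Z₁ Z₂ θ₁ θ₂ : Ω → ℝ)
    (hZ₁m : Measurable Z₁) (hZ₂m : Measurable Z₂)
    (hθ₁m : Measurable θ₁) (hθ₂m : Measurable θ₂)
    (hZ₁pos : ∀ ω, 0 ≤ Z₁ ω) (hZ₂pos : ∀ ω, 0 ≤ Z₂ ω)
    (hindep : iIndepFun ![Z₁, Z₂, θ₁, θ₂] ℙ)
    (hZid : Measure.map Z₁ ℙ = Measure.map Z₂ ℙ)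
    (hθ₁unif : Measure.map θ₁ ℙ
      = (ENNReal.ofReal (2 * π))⁻¹ • (volume.restrict (Set.Icc (0:ℝ) (2 * π))))
    (hθ₂unif : Measure.map θ₂ ℙ
      = (ENNReal.ofReal (2 * π))⁻¹ • (volume.restrict (Set.Icc (0:ℝ) (2 * π))))
    (c z_th α : ℝ) (hc : 0 < c) (hzth : 0 < z_th) (hα : 0 < α)
    (htail : ∀ z ≥ z_th, ℙ {ω | Z₁ ω > z} = ENNReal.ofReal (c / z ^ α)) :
    ∀ z ≥ 2 * z_th,
      ℙ {ω | Z₁ ω * Real.cos (θ₁ ω) - Z₂ ω * Real.cos (θ₂ ω) > z}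
        ≥ ENNReal.ofReal
            ((c / (2 * π)) * (∫ ϑ in (0:ℝ)..(π / 2), (Real.cos ϑ) ^ α)
              / z ^ α) := by
  intro z hz
  have hπ := Real.pi_pos
  have hzpos : 0 < z := by linarith
  have hmeas : ∀ i, Measurable (![Z₁, Z₂, θ₁, θ₂] i) := by
    intro i; fin_cases i <;> assumption
  -- notation
  set I : ℝ := ∫ ϑ in (0:ℝ)..(π / 2), (Real.cos ϑ) ^ α with hI
  have hInonneg : 0 ≤ I := by
    apply intervalIntegral.integral_nonneg (by positivity)
    intro x hx
    exact Real.rpow_nonneg (Real.cos_nonneg_of_mem_Icc ⟨by linarith [hx.1], hx.2⟩) α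
  -- tail of the law of Z₁
  have hν : ∀ t ≥ z_th, (Measure.map Z₁ ℙ) (Set.Ioi t) = ENNReal.ofReal (c / t ^ α) := by
    intro t ht
    rw [Measure.map_apply hZ₁m measurableSet_Ioi]
    exact htail t ht
  -- the sets S and T
  set S : Set (ℝ × ℝ) := {p | z < p.2 * Real.cos p.1} with hS
  have hSm : MeasurableSet S :=
    measurableSet_lt measurable_const (measurable_snd.mul (Real.measurable_cos.comp measurable_fst))
  set T : Set ℝ := {t | Real.cos t ≤ 0} with hT
  have hTm : MeasurableSet T := measurableSet_le Real.measurable_cos measurable_const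
  -- independence of θ₁ and Z₁
  have hIθZ : IndepFun θ₁ Z₁ ℙ := by
    have := hindep.indepFun (i := 2) (j := 0) (by decide)
    simpa using this
  have hmap : Measure.map (fun ω => (θ₁ ω, Z₁ ω)) ℙ
      = (Measure.map θ₁ ℙ).prod (Measure.map Z₁ ℙ) :=
    (indepFun_iff_map_prod_eq_prod_map_map hθ₁m.aemeasurable hZ₁m.aemeasurable).mp hIθZ
  have hAeq : ℙ ((fun ω => (θ₁ ω, Z₁ ω)) ⁻¹' S)
      = ∫⁻ θ, (Measure.map Z₁ ℙ) {x | z < x * Real.cos θ} ∂(Measure.map θ₁ ℙ) := by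
    rw [← Measure.map_apply (hθ₁m.prodMk hZ₁m) hSm, hmap, Measure.prod_apply hSm]
    rfl
  -- value of the inner measure where cos is positive
  have hval : ∀ θ : ℝ, 0 < Real.cos θ →
      (Measure.map Z₁ ℙ) {x | z < x * Real.cos θ} = ENNReal.ofReal (c * Real.cos θ ^ α / z ^ α) := by
    intro θ hcos
    have hcos1 : Real.cos θ ≤ 1 := Real.cos_le_one θ
    have hset : {x : ℝ | z < x * Real.cos θ} = Set.Ioi (z / Real.cos θ) := by
      ext x; simp [Set.mem_Ioi, div_lt_iff₀ hcos]
    have hge : z / Real.cos θ ≥ z_th := by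
      have : z ≤ z / Real.cos θ := by
        rw [le_div_iff₀ hcos]; nlinarith
      linarith
    rw [hset, hν _ hge]
    congr 1
    rw [Real.div_rpow hzpos.le hcos.le, div_div_eq_mul_div]
  -- the integrand as a real function
  set g : ℝ → ℝ := fun θ => c * Real.cos θ ^ α / z ^ α with hgdef
  have hgcont : Continuous g :=
    (continuous_const.mul ((Real.continuous_rpow_const hα.le).comp Real.continuous_cos)).div_const _
  have hgint : ∀ a b : ℝ, a ≤ b → (∫ θ in a..b, g θ) = c * (∫ θ in a..b, Real.cos θ ^ α) / z ^ α := by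
    intro a b _
    simp only [hgdef]
    rw [intervalIntegral.integral_div, intervalIntegral.integral_const_mul]
  -- piece on an interval where cos > 0
  have hpiece : ∀ a b : ℝ, a ≤ b → (∀ θ ∈ Set.Ioo a b, 0 < Real.cos θ) →
      (∫⁻ θ in Set.Ioo a b, (Measure.map Z₁ ℙ) {x | z < x * Real.cos θ})
        = ENNReal.ofReal (∫ θ in a..b, g θ) := by
    intro a b hab hpos
    rw [setLIntegral_congr_fun measurableSet_Ioo
      (fun θ hθ => hval θ (hpos θ hθ))]
    have hint : IntegrableOn g (Set.Ioo a b) :=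
      (hgcont.integrableOn_Icc).mono_set Set.Ioo_subset_Icc_self
    have hnn : 0 ≤ᵐ[volume.restrict (Set.Ioo a b)] g := by
      refine (ae_restrict_iff' measurableSet_Ioo).mpr (ae_of_all _ fun θ hθ => ?_)
      have := (hpos θ hθ).le
      exact div_nonneg (mul_nonneg hc.le (Real.rpow_nonneg this α)) (Real.rpow_nonneg hzpos.le α)
    rw [← ofReal_integral_eq_lintegral_ofReal hint hnn]
    congr 1
    rw [intervalIntegral.integral_of_le hab, MeasureTheory.integral_Ioc_eq_integral_Ioo]
  -- change of variables for the second piece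
  have hsecond : (∫ θ in (3*π/2)..(2*π), Real.cos θ ^ α) = I := by
    have h : ∀ x ∈ Set.uIcc (3*π/2) (2*π), Real.cos x ^ α = (fun t => Real.cos t ^ α) (2*π - x) := by
      intro x hx; simp [Real.cos_two_pi_sub]
    rw [intervalIntegral.integral_congr h,
      intervalIntegral.integral_comp_sub_left (fun t => Real.cos t ^ α) (2*π)]
    rw [hI]
    norm_num
    ring_nf
  -- lower bound for P(A)
  have hPA : (ENNReal.ofReal (2*π))⁻¹ * (2 * ENNReal.ofReal (c * I / z ^ α))
      ≤ ℙ ((fun ω => (θ₁ ω, Z₁ ω)) ⁻¹' S) := by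
    rw [hAeq, hθ₁unif, lintegral_smul_measure]
    refine mul_le_mul_right ?_ _
    have hsub : Set.Ioo 0 (π/2) ∪ Set.Ioo (3*π/2) (2*π) ⊆ Set.Icc (0:ℝ) (2*π) := by
      rintro x (hx | hx) <;> constructor <;> [linarith [hx.1]; linarith [hx.2]; linarith [hx.1]; linarith [hx.2]]
    have hdisj : Disjoint (Set.Ioo (0:ℝ) (π/2)) (Set.Ioo (3*π/2) (2*π)) := by
      apply Set.disjoint_left.mpr
      rintro x ⟨_, h2⟩ ⟨h3, _⟩; linarith
    calc 2 * ENNReal.ofReal (c * I / z ^ α)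
        = ENNReal.ofReal (∫ θ in (0:ℝ)..(π/2), g θ)
          + ENNReal.ofReal (∫ θ in (3*π/2)..(2*π), g θ) := by
          rw [hgint 0 (π/2) (by linarith), hgint (3*π/2) (2*π) (by linarith), hsecond, ← hI]
          ring
      _ = (∫⁻ θ in Set.Ioo 0 (π/2), (Measure.map Z₁ ℙ) {x | z < x * Real.cos θ})
          + (∫⁻ θ in Set.Ioo (3*π/2) (2*π), (Measure.map Z₁ ℙ) {x | z < x * Real.cos θ}) := by
          rw [hpiece 0 (π/2) (by linarith) (fun θ hθ =>
              Real.cos_pos_of_mem_Ioo ⟨by linarith [hθ.1], hθ.2⟩),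
            hpiece (3*π/2) (2*π) (by linarith) (fun θ hθ => ?_)]
          · have : Real.cos θ = Real.cos (θ - 2*π) := (Real.cos_sub_two_pi θ).symm
            rw [this]
            exact Real.cos_pos_of_mem_Ioo ⟨by linarith [hθ.1], by linarith [hθ.2]⟩
      _ = ∫⁻ θ in (Set.Ioo 0 (π/2) ∪ Set.Ioo (3*π/2) (2*π)),
            (Measure.map Z₁ ℙ) {x | z < x * Real.cos θ} := by
          rw [lintegral_union measurableSet_Ioo hdisj]
      _ ≤ ∫⁻ θ in Set.Icc (0:ℝ) (2*π), (Measure.map Z₁ ℙ) {x | z < x * Real.cos θ} :=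
          lintegral_mono_set hsub
  -- lower bound for P(B)
  have hPB : (ENNReal.ofReal (2*π))⁻¹ * ENNReal.ofReal π ≤ ℙ (θ₂ ⁻¹' T) := by
    rw [← Measure.map_apply hθ₂m hTm, hθ₂unif, Measure.smul_apply, smul_eq_mul]
    refine mul_le_mul_right ?_ _
    rw [Measure.restrict_apply hTm]
    calc ENNReal.ofReal π = volume (Set.Icc (π/2) (3*π/2)) := by
          rw [Real.volume_Icc]; congr 1; ring
      _ ≤ volume (T ∩ Set.Icc (0:ℝ) (2*π)) := by
          apply measure_mono
          intro x hx
          refine ⟨Real.cos_nonpos_of_pi_div_two_le_of_le hx.1 (by linarith [hx.2]), ?_, ?_⟩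
          · linarith [hx.1]
          · linarith [hx.2]
  -- independence of the pair and θ₂
  have hPairθ₂ : IndepFun (fun ω => (θ₁ ω, Z₁ ω)) θ₂ ℙ := by
    have := hindep.indepFun_prodMk hmeas 2 0 3 (by decide) (by decide)
    simpa using this
  have hprod : ℙ ((fun ω => (θ₁ ω, Z₁ ω)) ⁻¹' S ∩ θ₂ ⁻¹' T)
      = ℙ ((fun ω => (θ₁ ω, Z₁ ω)) ⁻¹' S) * ℙ (θ₂ ⁻¹' T) :=
    hPairθ₂.measure_inter_preimage_eq_mul S T hSm hTm
  -- inclusion into the target event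
  have hsub : ((fun ω => (θ₁ ω, Z₁ ω)) ⁻¹' S ∩ θ₂ ⁻¹' T)
      ⊆ {ω | Z₁ ω * Real.cos (θ₁ ω) - Z₂ ω * Real.cos (θ₂ ω) > z} := by
    rintro ω ⟨h1, h2⟩
    have h1' : z < Z₁ ω * Real.cos (θ₁ ω) := h1
    have h2' : Real.cos (θ₂ ω) ≤ 0 := h2
    have : Z₂ ω * Real.cos (θ₂ ω) ≤ 0 := mul_nonpos_iff.mpr (Or.inl ⟨hZ₂pos ω, h2'⟩)
    show z < _
    linarith
  -- final arithmetic
  set a : ENNReal := ENNReal.ofReal (2*π) with ha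
  have ha0 : a ≠ 0 := by
    simp [ha, ENNReal.ofReal_eq_zero]; linarith
  have haT : a ≠ ⊤ := ENNReal.ofReal_ne_top
  set K : ENNReal := ENNReal.ofReal (c * I / z ^ α) with hK
  have key : ENNReal.ofReal ((c / (2 * π)) * I / z ^ α)
      = a⁻¹ * (2 * K) * (a⁻¹ * ENNReal.ofReal π) := by
    have h2π : (2:ENNReal) * ENNReal.ofReal π = a := by
      rw [ha, ENNReal.ofReal_mul (by norm_num : (0:ℝ) ≤ 2)]
      norm_num
    have : a⁻¹ * (2 * K) * (a⁻¹ * ENNReal.ofReal π)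
        = (2 * ENNReal.ofReal π) * a⁻¹ * (a⁻¹ * K) := by ring
    rw [this, h2π]
    have hcancel : a * a⁻¹ = 1 := ENNReal.mul_inv_cancel ha0 haT
    rw [mul_comm a a⁻¹] at hcancel
    rw [show a * a⁻¹ * (a⁻¹ * K) = (a⁻¹ * a) * (a⁻¹ * K) by ring, hcancel, one_mul]
    rw [← ENNReal.ofReal_inv_of_pos (by linarith : (0:ℝ) < 2*π), ← ENNReal.ofReal_mul (by positivity)]
    congr 1
    field_simp
  calc ENNReal.ofReal ((c / (2 * π)) * I / z ^ α)
      = a⁻¹ * (2 * K) * (a⁻¹ * ENNReal.ofReal π) := key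
    _ ≤ ℙ ((fun ω => (θ₁ ω, Z₁ ω)) ⁻¹' S) * ℙ (θ₂ ⁻¹' T) := mul_le_mul' hPA hPB
    _ = ℙ ((fun ω => (θ₁ ω, Z₁ ω)) ⁻¹' S ∩ θ₂ ⁻¹' T) := hprod.symm
    _ ≤ ℙ {ω | Z₁ ω * Real.cos (θ₁ ω) - Z₂ ω * Real.cos (θ₂ ω) > z} := measure_mono hsub
end
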